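/- Let n ≥ 1 and let P ⊆ Q be rational polyhedra contained in [0,1]ⁿ. If there exists a Z-homeomorphism of P onto Q, then P = Q. -/

import Mathlib

open Set MeasureTheory

/-- The unit cube `[0,1]^n` in `ℝ^n`. -/
def cubeSet (n : ℕ) : Set (Fin n → ℝ) := Set.Icc 0 1

/-- A point all of whose coordinates are rational. -/
def IsRationalPoint {n : ℕ} (v : Fin n → ℝ) : Prop := ∀ i, ∃ q : ℚ, v i = (q : ℝ)

/-- A rational polyhedron: a finite union of convex hulls of finite sets of rational points. -/
def IsRationalPolyhedron {n : ℕ} (P : Set (Fin n → ℝ)) : Prop :=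
  ∃ S : Finset (Finset (Fin n → ℝ)),
    (∀ F ∈ S, ∀ v ∈ F, IsRationalPoint v) ∧
    P = ⋃ F ∈ S, convexHull ℝ (F : Set (Fin n → ℝ))

/-- An affine map `x ↦ Mx + b` with integer matrix `M` and integer vector `b`. -/
def IsIntAffine {n m : ℕ} (g : (Fin n → ℝ) → (Fin m → ℝ)) : Prop :=
  ∃ (M : Fin m → Fin n → ℤ) (b : Fin m → ℤ),
    ∀ x i, g x i = (∑ j, (M i j : ℝ) * x j) + (b i : ℝ)

/-- A Z-map on `P`: continuous on `P`, with finitely many integer affine pieces. -/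
def IsZMapOn {n m : ℕ} (P : Set (Fin n → ℝ)) (f : (Fin n → ℝ) → (Fin m → ℝ)) : Prop :=
  ContinuousOn f P ∧
  ∃ (k : ℕ) (g : Fin k → (Fin n → ℝ) → (Fin m → ℝ)),
    (∀ i, IsIntAffine (g i)) ∧ ∀ x ∈ P, ∃ i, f x = g i x

/-- `f` restricted to `P` is a Z-homeomorphism of `P` onto `Q`. -/
def IsZHomeoOnto {n m : ℕ} (P : Set (Fin n → ℝ)) (Q : Set (Fin m → ℝ))
    (f : (Fin n → ℝ) → (Fin m → ℝ)) : Prop :=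
  IsZMapOn P f ∧ f '' P = Q ∧ Set.InjOn f P ∧
  ∃ g : (Fin m → ℝ) → (Fin n → ℝ),
    IsZMapOn Q g ∧ (∀ x ∈ P, g (f x) = x) ∧ (∀ y ∈ Q, f (g y) = y)

/-- A Z-retraction of the cube `[0,1]^n`. -/
def IsZRetraction {n : ℕ} (σ : (Fin n → ℝ) → (Fin n → ℝ)) : Prop :=
  IsZMapOn (cubeSet n) σ ∧ Set.MapsTo σ (cubeSet n) (cubeSet n) ∧
  ∀ x ∈ cubeSet n, σ (σ x) = σ x

/-- The range `R_σ = σ([0,1]^n)` of a Z-retraction. -/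
def zRange {n : ℕ} (σ : (Fin n → ℝ) → (Fin n → ℝ)) : Set (Fin n → ℝ) := σ '' cubeSet n

/-- A Z-homeomorphism domain for `σ`: a rational polyhedron `Q ⊆ [0,1]^n` such that
`σ` restricted to `Q` is a Z-homeomorphism of `Q` onto `R_σ`. -/
def IsZHomeoDomain {n : ℕ} (σ : (Fin n → ℝ) → (Fin n → ℝ)) (Q : Set (Fin n → ℝ)) : Prop :=
  IsRationalPolyhedron Q ∧ Q ⊆ cubeSet n ∧ IsZHomeoOnto Q (zRange σ) σ

/-- A (Kuratowski) closed domain: `D` equals the closure of its interior. -/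
def IsClosedDomain {n : ℕ} (D : Set (Fin n → ℝ)) : Prop :=
  closure (interior D) = D

/-- A scalar integer affine map. -/
def IsIntAffine1 {n : ℕ} (g : (Fin n → ℝ) → ℝ) : Prop :=
  ∃ (m : Fin n → ℤ) (b : ℤ), ∀ x, g x = (∑ j, (m j : ℝ) * x j) + (b : ℝ)

/-- A scalar Z-map on `P`. -/
def IsZMapOn1 {n : ℕ} (P : Set (Fin n → ℝ)) (f : (Fin n → ℝ) → ℝ) : Prop :=
  ContinuousOn f P ∧
  ∃ (k : ℕ) (g : Fin k → (Fin n → ℝ) → ℝ),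
    (∀ i, IsIntAffine1 (g i)) ∧ ∀ x ∈ P, ∃ i, f x = g i x

/-- The free MV-algebra `McN([0,1]^n)`, viewed as a set of functions on the cube. -/
def McN (n : ℕ) : Set (↥(cubeSet n) → ℝ) :=
  { f | (∀ x, f x ∈ Set.Icc (0:ℝ) 1) ∧
    ∃ g : (Fin n → ℝ) → ℝ, IsZMapOn1 (cubeSet n) g ∧ ∀ x : ↥(cubeSet n), f x = g x.1 }

/-- Pointwise MV-sum `f ⊕ g = min(f + g, 1)`. -/
def mvAdd {X : Type*} (f g : X → ℝ) : X → ℝ := fun x => min (f x + g x) 1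

/-- Pointwise MV-negation `¬f = 1 - f`. -/
def mvNeg {X : Type*} (f : X → ℝ) : X → ℝ := fun x => 1 - f x

/-- The retract `A_σ = {g ∘ σ : g ∈ McN([0,1]^n)}` associated with a Z-retraction `σ`. -/
def retAlg {n : ℕ} (σ : (Fin n → ℝ) → (Fin n → ℝ)) : Set (↥(cubeSet n) → ℝ) :=
  { f | ∃ g ∈ McN n, ∀ (x : ↥(cubeSet n)) (h : σ x.1 ∈ cubeSet n), f x = g ⟨σ x.1, h⟩ }

/-- `ε` is a retraction of `McN([0,1]^n)` onto `A`. -/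
def IsMcNRetraction {n : ℕ} (ε : ↥(McN n) → ↥(McN n)) (A : Set (↥(cubeSet n) → ℝ)) : Prop :=
  (∀ (f g : ↥(McN n)) (h : mvAdd f.1 g.1 ∈ McN n),
      (ε ⟨mvAdd f.1 g.1, h⟩).1 = mvAdd (ε f).1 (ε g).1) ∧
  (∀ (f : ↥(McN n)) (h : mvNeg f.1 ∈ McN n),
      (ε ⟨mvNeg f.1, h⟩).1 = mvNeg (ε f).1) ∧
  (∀ f, ε (ε f) = ε f) ∧
  Subtype.val '' Set.range ε = A

/-- An MV-isomorphism between two sets of `[0,1]`-valued functions. -/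
def IsMVIsoFun {X Y : Type*} (A : Set (X → ℝ)) (B : Set (Y → ℝ)) (h : ↥A → ↥B) : Prop :=
  Function.Bijective h ∧
  (∀ (f g : ↥A) (hm : mvAdd f.1 g.1 ∈ A),
      (h ⟨mvAdd f.1 g.1, hm⟩).1 = mvAdd (h f).1 (h g).1) ∧
  (∀ (f : ↥A) (hm : mvNeg f.1 ∈ A),
      (h ⟨mvNeg f.1, hm⟩).1 = mvNeg (h f).1)

section Aux

def Dden (n : ℕ) (d : ℕ) : Set (Fin n → ℝ) := {x | ∀ i, ∃ z : ℤ, x i = (z : ℝ) / d}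

lemma finite_cube_den (n d : ℕ) (hd : 0 < d) : (cubeSet n ∩ Dden n d).Finite := by
  have h : (cubeSet n ∩ Dden n d) ⊆
      (fun z : Fin n → ℤ => fun i => (z i : ℝ) / d) '' (Set.pi Set.univ fun _ => Set.Icc (0:ℤ) d) := by
    rintro x ⟨hxc, hxd⟩
    choose z hz using hxd
    refine ⟨z, ?_, by funext i; exact (hz i).symm⟩
    intro i _
    have hd0 : (0:ℝ) < d := by exact_mod_cast hd
    have h0 : 0 ≤ x i := hxc.1 i
    have h1 : x i ≤ 1 := hxc.2 i
    rw [hz i] at h0 h1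
    rw [le_div_iff₀ hd0] at h0
    rw [div_le_one hd0] at h1
    constructor
    · exact_mod_cast (by linarith : (0:ℝ) ≤ (z i : ℝ))
    · exact_mod_cast h1
  exact Set.Finite.subset (Set.Finite.image _ (Set.Finite.pi fun _ => Set.finite_Icc _ _)) h

lemma rat_mem_den {n : ℕ} {x : Fin n → ℝ} (hx : IsRationalPoint x) :
    ∃ d : ℕ, 0 < d ∧ x ∈ Dden n d := by
  choose q hq using hx
  have hprod : 0 < ∏ j, (q j).den := Finset.prod_pos fun j _ => (q j).pos
  refine ⟨∏ i, (q i).den, hprod, fun i => ?_⟩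
  obtain ⟨c, hc⟩ : (q i).den ∣ ∏ j, (q j).den := Finset.dvd_prod_of_mem _ (Finset.mem_univ i)
  have hc0 : c ≠ 0 := by rintro rfl; rw [mul_zero] at hc; omega
  refine ⟨(q i).num * c, ?_⟩
  rw [hq i, hc, Rat.cast_def]
  push_cast
  rw [mul_div_mul_right]
  exact_mod_cast hc0

lemma zmap_den {n m d : ℕ} {P : Set (Fin n → ℝ)} {f : (Fin n → ℝ) → (Fin m → ℝ)}
    (hf : IsZMapOn P f) (hd : 0 < d) {x : Fin n → ℝ} (hx : x ∈ P) (hxd : x ∈ Dden n d) :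
    f x ∈ Dden m d := by
  obtain ⟨-, k, g, hg, hfx⟩ := hf
  obtain ⟨i0, hi0⟩ := hfx x hx
  obtain ⟨M, b, hMb⟩ := hg i0
  choose z hz using hxd
  intro i
  refine ⟨(∑ j, M i j * z j) + d * b i, ?_⟩
  have hd0 : (d:ℝ) ≠ 0 := by positivity
  rw [hi0, hMb]
  push_cast
  rw [eq_div_iff hd0]
  have h1 : ∀ j ∈ Finset.univ, (M i j:ℝ) * x j * d = (M i j : ℝ) * z j := fun j _ => by
    rw [hz j]; field_simp
  rw [add_mul, Finset.sum_mul, Finset.sum_congr rfl h1]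
  ring

lemma polyhedron_closed {n : ℕ} {P : Set (Fin n → ℝ)} (hP : IsRationalPolyhedron P) :
    IsClosed P := by
  obtain ⟨S, -, rfl⟩ := hP
  exact Set.Finite.isClosed_biUnion S.finite_toSet fun F _ =>
    (F.finite_toSet.isCompact_convexHull (𝕜 := ℝ)).isClosed

lemma isRat_sum {ι : Type*} (s : Finset ι) (f : ι → ℝ) (h : ∀ i ∈ s, ∃ q : ℚ, f i = q) :
    ∃ q : ℚ, ∑ i ∈ s, f i = q := by
  classical
  induction s using Finset.induction_on with
  | empty => exact ⟨0, by simp⟩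
  | @insert a s ha ih =>
    obtain ⟨qa, hqa⟩ := h a (Finset.mem_insert_self a s)
    obtain ⟨qs, hqs⟩ := ih (fun i hi => h i (Finset.mem_insert_of_mem hi))
    exact ⟨qa + qs, by rw [Finset.sum_insert ha, hqa, hqs]; push_cast; ring⟩

lemma dense_rat_hull {n : ℕ} (F : Finset (Fin n → ℝ)) (hF : ∀ v ∈ F, IsRationalPoint v)
    {x : Fin n → ℝ} (hx : x ∈ convexHull ℝ (F : Set (Fin n → ℝ))) :
    x ∈ closure {z | z ∈ convexHull ℝ (F : Set (Fin n → ℝ)) ∧ IsRationalPoint z} := by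
  classical
  rw [Finset.convexHull_eq] at hx
  obtain ⟨w, hw0, hw1, hwx⟩ := hx
  have hFne : F.Nonempty := by
    by_contra h
    rw [Finset.not_nonempty_iff_eq_empty] at h
    simp [h] at hw1
  obtain ⟨v0, hv0F, hv0max⟩ := F.exists_max_image w hFne
  have hv0pos : 0 < w v0 := by
    by_contra h
    push_neg at h
    have : ∑ v ∈ F, w v ≤ 0 :=
      Finset.sum_nonpos fun v hv => le_trans (hv0max v hv) h
    linarith
  set m : ℕ := F.card with hm
  set B : ℝ := 1 + ∑ v ∈ F, ∑ j, |v j| with hB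
  have hB1 : (1:ℝ) ≤ B := by
    have : (0:ℝ) ≤ ∑ v ∈ F, ∑ j, |v j| :=
      Finset.sum_nonneg fun v _ => Finset.sum_nonneg fun j _ => abs_nonneg _
    linarith
  have hBpos : (0:ℝ) < B := by linarith
  have hvB : ∀ v ∈ F, ∀ i, |v i| ≤ B := by
    intro v hv i
    have h1 : |v i| ≤ ∑ j, |v j| :=
      Finset.single_le_sum (f := fun j => |v j|) (fun j _ => abs_nonneg _) (Finset.mem_univ i)
    have h2 : ∑ j, |v j| ≤ ∑ v ∈ F, ∑ j, |v j| :=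
      Finset.single_le_sum (f := fun v : Fin n → ℝ => ∑ j, |v j|)
        (fun v _ => Finset.sum_nonneg fun j _ => abs_nonneg _) hv
    linarith
  rw [Metric.mem_closure_iff]
  intro ε hε
  -- choose δ
  set C : ℝ := (m:ℝ)^2 * B + 1 with hC
  have hCpos : 0 < C := by positivity
  set δ : ℝ := ε / C with hδ
  have hδpos : 0 < δ := by positivity
  have hkey : (m:ℝ)^2 * B * δ < ε := by
    rw [hδ, hC]
    rw [div_eq_mul_inv, ← mul_assoc]
    rw [mul_comm ((m:ℝ)^2*B) ε, mul_assoc]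
    have : ((m:ℝ)^2 * B) * ((m:ℝ)^2*B+1)⁻¹ < 1 := by
      rw [← div_eq_mul_inv, div_lt_one (by positivity)]
      linarith
    nlinarith [hε]
  -- choose rational weights on F.erase v0
  have key : ∀ v : Fin n → ℝ, ∃ q : ℚ,
      v ∈ F.erase v0 → (0:ℝ) ≤ (q:ℝ) ∧ (q:ℝ) ≤ w v ∧ w v - δ ≤ (q:ℝ) := by
    intro v
    by_cases hv : v ∈ F.erase v0
    · have hwv : 0 ≤ w v := hw0 v (Finset.mem_of_mem_erase hv)
      rcases eq_or_lt_of_le hwv with h | h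
      · exact ⟨0, fun _ => by simp [← h]; linarith⟩
      · obtain ⟨q, hq1, hq2⟩ := exists_rat_btwn (show max 0 (w v - δ) < w v by
          rw [max_lt_iff]; exact ⟨h, by linarith⟩)
        rw [max_lt_iff] at hq1
        exact ⟨q, fun _ => ⟨hq1.1.le, hq2.le, hq1.2.le⟩⟩
    · exact ⟨0, fun h => absurd h hv⟩
  choose qe hqe using key
  set q0 : ℚ := 1 - ∑ v ∈ F.erase v0, qe v with hq0
  set u : (Fin n → ℝ) → ℝ := fun v => if v = v0 then (q0:ℝ) else (qe v : ℝ) with hu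
  have hsume : ∀ v ∈ F.erase v0, u v = (qe v : ℝ) := by
    intro v hv
    have : v ≠ v0 := Finset.ne_of_mem_erase hv
    simp [hu, this]
  have huv0 : u v0 = (q0:ℝ) := by simp [hu]
  have hq0cast : (q0:ℝ) = 1 - ∑ v ∈ F.erase v0, (qe v : ℝ) := by
    rw [hq0]; push_cast; ring
  have hsumu : ∑ v ∈ F, u v = 1 := by
    rw [← Finset.add_sum_erase F u hv0F, huv0, hq0cast,
      Finset.sum_congr rfl hsume]
    ring
  have hwe : ∑ v ∈ F.erase v0, w v = 1 - w v0 := by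
    rw [← Finset.add_sum_erase F w hv0F] at hw1
    linarith
  have hqle : ∑ v ∈ F.erase v0, (qe v : ℝ) ≤ ∑ v ∈ F.erase v0, w v :=
    Finset.sum_le_sum fun v hv => (hqe v hv).2.1
  have hq0ge : (q0:ℝ) ≥ w v0 := by
    rw [hq0cast]
    linarith
  have hu0 : ∀ v ∈ F, 0 ≤ u v := by
    intro v hv
    by_cases h : v = v0
    · rw [h, huv0]; linarith
    · rw [hsume v (Finset.mem_erase.2 ⟨h, hv⟩)]
      exact (hqe v (Finset.mem_erase.2 ⟨h, hv⟩)).1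
  -- deviation bound
  have hdev : ∀ v ∈ F, |u v - w v| ≤ (m:ℝ) * δ := by
    intro v hv
    have hm1 : (1:ℝ) ≤ (m:ℝ) := by
      have : 1 ≤ m := Finset.card_pos.2 hFne
      exact_mod_cast this
    by_cases h : v = v0
    · have hdiff : (q0:ℝ) - w v0 = ∑ v ∈ F.erase v0, (w v - (qe v:ℝ)) := by
        rw [hq0cast, Finset.sum_sub_distrib, hwe]; ring
      have hbound : ∑ v ∈ F.erase v0, (w v - (qe v:ℝ)) ≤ (F.erase v0).card • δ :=
        Finset.sum_le_card_nsmul _ _ δ fun v hv => by linarith [(hqe v hv).2.2]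
      rw [nsmul_eq_mul] at hbound
      have hcard : ((F.erase v0).card : ℝ) ≤ (m:ℝ) := by
        exact_mod_cast Finset.card_le_card (Finset.erase_subset _ _)
      have hcm : ((F.erase v0).card : ℝ) * δ ≤ (m:ℝ) * δ :=
        mul_le_mul_of_nonneg_right hcard hδpos.le
      rw [h, huv0, abs_of_nonneg (by linarith [hq0ge])]
      linarith
    · have hv' : v ∈ F.erase v0 := Finset.mem_erase.2 ⟨h, hv⟩
      rw [hsume v hv', abs_le]
      have h2 := hqe v hv'
      constructor
      · nlinarith [h2.2.2, hδpos, hm1]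
      · nlinarith [h2.2.1, hδpos, hm1]
  set z : Fin n → ℝ := ∑ v ∈ F, u v • v with hz
  have hzc : z ∈ convexHull ℝ (F : Set (Fin n → ℝ)) := by
    rw [Finset.convexHull_eq]
    refine ⟨u, hu0, hsumu, ?_⟩
    rw [Finset.centerMass_eq_of_sum_1 _ _ hsumu]
    simp [hz]
  have hurat : ∀ v, ∃ q : ℚ, u v = (q:ℝ) := by
    intro v
    by_cases h : v = v0
    · exact ⟨q0, by simp [hu, h]⟩
    · exact ⟨qe v, by simp [hu, h]⟩
  have hzi : ∀ i, z i = ∑ v ∈ F, u v * v i := by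
    intro i; rw [hz]; simp [Finset.sum_apply]
  have hzrat : IsRationalPoint z := by
    intro i
    rw [hzi i]
    apply isRat_sum
    intro v hv
    obtain ⟨a, ha⟩ := hurat v
    obtain ⟨b, hb⟩ := hF v hv i
    exact ⟨a * b, by rw [ha, hb]; push_cast; ring⟩
  refine ⟨z, ⟨hzc, hzrat⟩, ?_⟩
  rw [dist_pi_lt_iff hε]
  intro i
  have hxi : x i = ∑ v ∈ F, w v * v i := by
    rw [← hwx, Finset.centerMass_eq_of_sum_1 _ _ hw1]
    simp [Finset.sum_apply]
  rw [Real.dist_eq, hxi, hzi i, ← Finset.sum_sub_distrib]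
  have hfin : (m:ℝ) * ((m:ℝ) * δ * B) < ε := by
    have : (m:ℝ) * ((m:ℝ) * δ * B) = (m:ℝ)^2 * B * δ := by ring
    linarith [hkey]
  calc |∑ v ∈ F, (w v * v i - u v * v i)|
      ≤ ∑ v ∈ F, |w v * v i - u v * v i| := Finset.abs_sum_le_sum_abs _ _
    _ ≤ ∑ _v ∈ F, (m:ℝ) * δ * B := by
        apply Finset.sum_le_sum
        intro v hv
        rw [show w v * v i - u v * v i = (w v - u v) * v i by ring, abs_mul]
        have h1 : |w v - u v| ≤ (m:ℝ) * δ := by rw [abs_sub_comm]; exact hdev v hv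
        exact mul_le_mul h1 (hvB v hv i) (abs_nonneg _) (by positivity)
    _ = (m:ℝ) * ((m:ℝ) * δ * B) := by rw [Finset.sum_const, nsmul_eq_mul, hm]
    _ < ε := hfin

end Aux

/-- Two comparable Z-homeomorphic rational polyhedra in the cube are equal. -/
theorem stmt17 {n : ℕ} (hn : 1 ≤ n) (P Q : Set (Fin n → ℝ))
    (hP : IsRationalPolyhedron P) (hQ : IsRationalPolyhedron Q)
    (hPQ : P ⊆ Q) (hQc : Q ⊆ cubeSet n)
    (hhom : ∃ f, IsZHomeoOnto P Q f) : P = Q := by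
  obtain ⟨f, hfz, hfim, hfinj, g, hgz, hgf, hfg⟩ := hhom
  have hPc : IsClosed P := polyhedron_closed hP
  have key : ∀ d : ℕ, 0 < d → P ∩ Dden n d = Q ∩ Dden n d := by
    intro d hd
    have hQfin : (Q ∩ Dden n d).Finite :=
      (finite_cube_den n d hd).subset (fun y hy => ⟨hQc hy.1, hy.2⟩)
    have hPfin : (P ∩ Dden n d).Finite := hQfin.subset (fun y hy => ⟨hPQ hy.1, hy.2⟩)
    have hsub : P ∩ Dden n d ⊆ Q ∩ Dden n d := fun y hy => ⟨hPQ hy.1, hy.2⟩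
    have hgim : g '' (Q ∩ Dden n d) ⊆ P ∩ Dden n d := by
      rintro _ ⟨y, ⟨hyQ, hyD⟩, rfl⟩
      have hgy : g y ∈ P := by
        rw [← hfim] at hyQ
        obtain ⟨x, hxP, rfl⟩ := hyQ
        rw [hgf x hxP]; exact hxP
      exact ⟨hgy, zmap_den hgz hd hyQ hyD⟩
    have hginj : Set.InjOn g (Q ∩ Dden n d) := by
      intro a ha b hb hab
      rw [← hfg a ha.1, ← hfg b hb.1, hab]
    have hle : (Q ∩ Dden n d).ncard ≤ (P ∩ Dden n d).ncard := by
      rw [← Set.ncard_image_of_injOn hginj]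
      exact Set.ncard_le_ncard hgim hPfin
    exact Set.eq_of_subset_of_ncard_le hsub hle hQfin
  have hratQ : ∀ z ∈ Q, IsRationalPoint z → z ∈ P := by
    intro z hzQ hzr
    obtain ⟨d, hd, hzd⟩ := rat_mem_den hzr
    have hz : z ∈ Q ∩ Dden n d := ⟨hzQ, hzd⟩
    rw [← key d hd] at hz
    exact hz.1
  apply Set.Subset.antisymm hPQ
  intro x hxQ
  obtain ⟨S, hS, hQeq⟩ := hQ
  have hxU : x ∈ ⋃ F ∈ S, convexHull ℝ (F : Set (Fin n → ℝ)) := hQeq ▸ hxQ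
  simp only [Set.mem_iUnion] at hxU
  obtain ⟨F, hFS, hxF⟩ := hxU
  have hdense := dense_rat_hull F (hS F hFS) hxF
  have hsubP : {z | z ∈ convexHull ℝ (F : Set (Fin n → ℝ)) ∧ IsRationalPoint z} ⊆ P := by
    rintro z ⟨hz1, hz2⟩
    have hzQ : z ∈ Q := by
      rw [hQeq]
      exact Set.mem_biUnion hFS hz1
    exact hratQ z hzQ hz2
  have hcl := closure_mono hsubP hdense
  rwa [hPc.closure_eq] at hcl
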